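/- Let Γ be a finite directed multigraph with vertex set {v_1, …, v_n} and a weight function w from its edge set to the integers, and let L be its n×n Laplacian matrix. For any fixed index r, let L_r denote the matrix obtained from L by deleting the r-th row and r-th column. Then det(L_r) equals N(Γ, w, v_r), the weighted number of oriented spanning trees of Γ rooted at v_r. -/

import Mathlib

/-- A finite directed multigraph on vertex type `V` with edge type `E`. -/
structure Multidigraph (V E : Type) where
  src : E → V
  tgt : E → V

/-- `T` is an oriented spanning tree of `G` rooted at `r`: every vertex `v ≠ r`
has in-degree 1 in `T`, the root `r` has in-degree 0 in `T`, and `T` contains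
no oriented cycle. -/
def IsOrientedSpanningTree {V E : Type} [Fintype E] [DecidableEq V]
    (G : Multidigraph V E) (r : V) (T : Finset E) : Prop :=
  (∀ v : V, v ≠ r → (T.filter (fun e => G.tgt e = v)).card = 1) ∧
  (T.filter (fun e => G.tgt e = r)).card = 0 ∧
  ¬ ∃ l : List E, l ≠ [] ∧ (∀ e ∈ l, e ∈ T) ∧
      l.Chain' (fun e f => G.tgt e = G.src f) ∧
      ∀ e₁ ∈ l.head?, ∀ e₂ ∈ l.getLast?, G.tgt e₂ = G.src e₁

open Classical in
/-- The weighted number `N(Γ, w, r)` of oriented spanning trees rooted at `r`. -/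
noncomputable def treeCount {V E : Type} [Fintype E] [DecidableEq V]
    (G : Multidigraph V E) (w : E → ℤ) (r : V) : ℤ :=
  ∑ T : Finset E, if IsOrientedSpanningTree G r T then ∏ e ∈ T, w e else 0


set_option linter.unusedSectionVars false

namespace MTT

set_option linter.unusedSectionVars false
open Finset Matrix

variable {n : ℕ} {E : Type} [Fintype E] [DecidableEq E]

variable (G : Multidigraph (Fin (n+1)) E) (r : Fin (n+1))

/-- the column vector attached to an edge -/
def col (e : E) : Fin n → ℤ := fun i =>
  (if r.succAbove i = G.tgt e then 1 else 0) - (if r.succAbove i = G.src e then 1 else 0)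

def coef (w : E → ℤ) (j : Fin n) (e : E) : ℤ :=
  if G.tgt e = r.succAbove j ∧ G.src e ≠ G.tgt e then w e else 0

def Good (f : Fin n → E) : Prop :=
  ∀ j, G.tgt (f j) = r.succAbove j ∧ G.src (f j) ≠ G.tgt (f j)

def pf (f : Fin n → E) (j : Fin n) : Option (Fin n) := finSuccEquiv' r (G.src (f j))

def pstep (f : Fin n → E) : Option (Fin n) → Option (Fin n) := fun o => o.bind (pf G r f)

def Acyc (f : Fin n → E) : Prop := ∀ j, ∃ m, (pstep G r f)^[m] (some j) = none

def D (f : Fin n → E) : Matrix (Fin n) (Fin n) ℤ := Matrix.of fun j i => col G r (f j) i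

lemma pf_eq_some (f : Fin n → E) (j i : Fin n) :
    pf G r f j = some i ↔ G.src (f j) = r.succAbove i := by
  rw [pf, ← finSuccEquiv'_succAbove r i, Equiv.apply_eq_iff_eq]

lemma D_apply (f : Fin n → E) (hf : Good G r f) (j i : Fin n) :
    D G r f j i = (if i = j then 1 else 0) - (if pf G r f j = some i then 1 else 0) := by
  have h1 : (r.succAbove i = G.tgt (f j)) ↔ i = j := by
    rw [(hf j).1]
    exact ⟨fun h => Fin.succAbove_right_injective h, fun h => by rw [h]⟩
  have h2 : (r.succAbove i = G.src (f j)) ↔ pf G r f j = some i := by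
    rw [pf_eq_some]; exact eq_comm
  simp only [D, col, Matrix.of_apply, h1, h2]

lemma rank_of_acyc (f : Fin n → E) (hA : Acyc G r f) :
    ∃ h : Fin n → ℕ, ∀ j i, pf G r f j = some i → h i < h j := by
  refine ⟨fun j => Nat.find (hA j), fun j i hji => ?_⟩
  have h0 : (pstep G r f)^[Nat.find (hA j)] (some j) = none := Nat.find_spec (hA j)
  have hne : Nat.find (hA j) ≠ 0 := by
    intro h; rw [h] at h0; simp at h0
  obtain ⟨k, hk⟩ := Nat.exists_eq_succ_of_ne_zero hne
  rw [hk, Function.iterate_succ_apply] at h0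
  have hx : pstep G r f (some j) = some i := by simp [pstep, hji]
  rw [hx] at h0
  have : Nat.find (hA i) ≤ k := Nat.find_le h0
  show Nat.find (hA i) < Nat.find (hA j)
  omega

lemma det_D_of_rank (f : Fin n → E) (hf : Good G r f) (h : Fin n → ℕ)
    (hh : ∀ j i, pf G r f j = some i → h i < h j) : (D G r f).det = 1 := by
  rw [← Matrix.det_transpose]
  have hBT : ((D G r f)ᵀ).BlockTriangular h := by
    intro i j hij
    have hne : ¬ (i = j) := fun e => by subst e; exact lt_irrefl _ hij
    have hp : ¬ (pf G r f j = some i) := fun hp => absurd (hh j i hp) (by omega)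
    rw [Matrix.transpose_apply, D_apply G r f hf, if_neg hne, if_neg hp, sub_zero]
  rw [hBT.det]
  refine Finset.prod_eq_one fun a _ => ?_
  have hblock : (D G r f)ᵀ.toSquareBlock h a = 1 := by
    ext ⟨i, hi⟩ ⟨j, hj⟩
    have hD : D G r f j i = if i = j then 1 else 0 := by
      have hp : ¬ (pf G r f j = some i) := fun hp => by
        have := hh j i hp; rw [hi, hj] at this; omega
      rw [D_apply G r f hf, if_neg hp, sub_zero]
    simp only [Matrix.toSquareBlock_def, Matrix.transpose_apply, hD, Matrix.one_apply,
      Subtype.mk.injEq]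
    simp [hD]
  rw [hblock, Matrix.det_one]

open Classical in
lemma det_D_of_not_acyc (f : Fin n → E) (hf : Good G r f) (hA : ¬ Acyc G r f) :
    (D G r f).det = 0 := by
  rw [← Matrix.exists_vecMul_eq_zero_iff]
  rw [Acyc] at hA; push_neg at hA
  obtain ⟨j₀, hj₀⟩ := hA
  have hsome : ∀ m, ((pstep G r f)^[m] (some j₀)).isSome :=
    fun m => Option.ne_none_iff_isSome.mp (hj₀ m)
  set u : ℕ → Fin n := fun m => ((pstep G r f)^[m] (some j₀)).get (hsome m) with hu
  have hiter : ∀ m, (pstep G r f)^[m] (some j₀) = some (u m) := fun m => (Option.some_get _).symm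
  have hstep : ∀ m, pf G r f (u m) = some (u (m+1)) := by
    intro m
    have h1 : (pstep G r f)^[m+1] (some j₀) = pstep G r f (some (u m)) := by
      rw [Function.iterate_succ_apply', hiter m]
    rw [hiter (m+1)] at h1
    simpa [pstep] using h1.symm
  obtain ⟨s, t, hst, hust⟩ := Fintype.exists_ne_map_eq_of_card_lt
    (fun k : Fin (n+1) => u k) (by simp)
  have hex : ∃ s' t' : ℕ, s' < t' ∧ u s' = u t' := by
    rcases lt_or_gt_of_ne hst with h | h
    · exact ⟨s, t, h, hust⟩
    · exact ⟨t, s, h, hust.symm⟩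
  obtain ⟨s, t, hlt, hust⟩ := hex
  refine ⟨fun i => ∑ m ∈ Finset.Ico s t, if u m = i then 1 else 0, ?_, ?_⟩
  · intro h0
    have h1 : (1:ℤ) ≤ ∑ m ∈ Finset.Ico s t, if u m = u s then 1 else 0 := by
      have := Finset.single_le_sum (f := fun m => if u m = u s then (1:ℤ) else 0)
        (fun m _ => by by_cases h : u m = u s <;> simp [h]) (Finset.mem_Ico.mpr ⟨le_refl s, hlt⟩)
      simpa using this
    have h2 := congrFun h0 (u s)
    simp only [Pi.zero_apply] at h2
    rw [h2] at h1; norm_num at h1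
  · funext j'
    have key : ∀ m, D G r f (u m) j' =
        (if j' = u m then 1 else 0) - (if j' = u (m+1) then 1 else 0) := by
      intro m
      rw [D_apply G r f hf]
      congr 1
      rw [hstep m]
      simp [eq_comm]
    have : Matrix.vecMul (fun i => ∑ m ∈ Finset.Ico s t, if u m = i then (1:ℤ) else 0)
        (D G r f) j' = ∑ m ∈ Finset.Ico s t, D G r f (u m) j' := by
      simp only [Matrix.vecMul, dotProduct]
      simp only [Finset.sum_mul, ite_mul, one_mul, zero_mul]
      rw [Finset.sum_comm]
      exact Finset.sum_congr rfl fun m _ => Finset.sum_ite_eq Finset.univ (u m) _ |>.trans (by simp)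
    rw [Pi.zero_apply, this]
    calc ∑ m ∈ Finset.Ico s t, D G r f (u m) j'
        = ∑ m ∈ Finset.Ico s t,
            ((if j' = u m then (1:ℤ) else 0) - (if j' = u (m+1) then 1 else 0)) :=
          Finset.sum_congr rfl fun m _ => key m
      _ = 0 := by
          rw [Finset.sum_Ico_eq_sum_range]
          have := Finset.sum_range_sub' (fun i => if j' = u (s + i) then (1:ℤ) else 0) (t - s)
          simp only [add_zero] at this
          rw [Finset.sum_congr rfl (fun i _ => by rw [show s + i + 1 = s + (i+1) by omega]), this]
          rw [show s + (t - s) = t by omega, hust]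
          ring

lemma entry_eq (w : E → ℤ) (a : Fin (n + 1) → Fin (n + 1) → ℤ)
    (ha_diag : ∀ i, a i i = 0)
    (ha_off : ∀ i j, i ≠ j →
      a i j = ∑ e ∈ Finset.univ.filter (fun e => G.src e = i ∧ G.tgt e = j), w e)
    (L : Matrix (Fin (n + 1)) (Fin (n + 1)) ℤ)
    (hL_off : ∀ i j, i ≠ j → L i j = -a i j)
    (hL_diag : ∀ j, L j j = ∑ k, a k j) (i j : Fin n) :
    L (r.succAbove i) (r.succAbove j) = ∑ e : E, coef G r w j e * col G r e i := by
  by_cases hij : i = j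
  · subst hij
    rw [hL_diag]
    have step1 : ∀ k, a k (r.succAbove i) = ∑ e : E,
        (if G.src e = k ∧ G.tgt e = r.succAbove i ∧ k ≠ r.succAbove i then w e else 0) := by
      intro k
      by_cases hk : k = r.succAbove i
      · subst hk; rw [ha_diag]
        symm; apply Finset.sum_eq_zero; intro e _; rw [if_neg]; tauto
      · rw [ha_off _ _ hk, Finset.sum_filter]
        apply Finset.sum_congr rfl; intro e _
        exact if_congr (by tauto) rfl rfl
    rw [Finset.sum_congr rfl (fun k _ => step1 k), Finset.sum_comm]
    apply Finset.sum_congr rfl; intro e _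
    have step2 : ∀ k : Fin (n+1),
        (if G.src e = k ∧ G.tgt e = r.succAbove i ∧ k ≠ r.succAbove i then w e else 0) =
        if G.src e = k then
          (if G.tgt e = r.succAbove i ∧ G.src e ≠ r.succAbove i then w e else 0) else 0 := by
      intro k
      by_cases h : G.src e = k
      · subst h; rw [if_pos rfl]; exact if_congr (by tauto) rfl rfl
      · rw [if_neg (by tauto), if_neg h]
    rw [Finset.sum_congr rfl (fun k _ => step2 k), Finset.sum_ite_eq Finset.univ (G.src e)]
    simp only [Finset.mem_univ, if_true]
    simp only [coef, col]
    rw [show (if r.succAbove i = G.tgt e then (1:ℤ) else 0)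
        = if G.tgt e = r.succAbove i then 1 else 0 from if_congr eq_comm rfl rfl,
      show (if r.succAbove i = G.src e then (1:ℤ) else 0)
        = if G.src e = r.succAbove i then 1 else 0 from if_congr eq_comm rfl rfl]
    by_cases h1 : G.tgt e = r.succAbove i <;> by_cases h2 : G.src e = r.succAbove i <;>
      simp [h1, h2]
  · have hvv : r.succAbove i ≠ r.succAbove j := Fin.succAbove_right_injective.ne hij
    rw [hL_off _ _ hvv, ha_off _ _ hvv, Finset.sum_filter, ← Finset.sum_neg_distrib]
    apply Finset.sum_congr rfl; intro e _
    simp only [coef, col]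
    rw [show (if r.succAbove i = G.tgt e then (1:ℤ) else 0)
        = if G.tgt e = r.succAbove i then 1 else 0 from if_congr eq_comm rfl rfl,
      show (if r.succAbove i = G.src e then (1:ℤ) else 0)
        = if G.src e = r.succAbove i then 1 else 0 from if_congr eq_comm rfl rfl]
    by_cases h1 : G.tgt e = r.succAbove j <;> by_cases h2 : G.src e = r.succAbove i <;>
      simp [h1, h2, hvv, Ne.symm hvv]
lemma det_eq_sum (w : E → ℤ) (a : Fin (n + 1) → Fin (n + 1) → ℤ)
    (ha_diag : ∀ i, a i i = 0)
    (ha_off : ∀ i j, i ≠ j →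
      a i j = ∑ e ∈ Finset.univ.filter (fun e => G.src e = i ∧ G.tgt e = j), w e)
    (L : Matrix (Fin (n + 1)) (Fin (n + 1)) ℤ)
    (hL_off : ∀ i j, i ≠ j → L i j = -a i j)
    (hL_diag : ∀ j, L j j = ∑ k, a k j) :
    (L.submatrix r.succAbove r.succAbove).det
      = ∑ f : Fin n → E, (∏ j, coef G r w j (f j)) * (D G r f).det := by
  have hM : L.submatrix r.succAbove r.succAbove
      = (Matrix.of fun j => ∑ e : E, coef G r w j e • col G r e)ᵀ := by
    ext i j
    rw [Matrix.transpose_apply, Matrix.submatrix_apply,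
      entry_eq G r w a ha_diag ha_off L hL_off hL_diag i j]
    simp [Finset.sum_apply]
  rw [hM, Matrix.det_transpose]
  have hdet : (Matrix.of fun j => ∑ e : E, coef G r w j e • col G r e).det
      = (Matrix.detRowAlternating).toMultilinearMap
          (fun j => ∑ e ∈ (Finset.univ : Finset E), coef G r w j e • col G r e) := rfl
  rw [hdet, MultilinearMap.map_sum_finset]
  rw [Fintype.piFinset_univ]
  apply Finset.sum_congr rfl; intro f _
  have := MultilinearMap.map_smul_univ (Matrix.detRowAlternating).toMultilinearMap
    (fun j => coef G r w j (f j)) (fun j => col G r (f j))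
  rw [this, smul_eq_mul]
  rfl
open Classical in
lemma det_eq_sum_good (w : E → ℤ) (a : Fin (n + 1) → Fin (n + 1) → ℤ)
    (ha_diag : ∀ i, a i i = 0)
    (ha_off : ∀ i j, i ≠ j →
      a i j = ∑ e ∈ Finset.univ.filter (fun e => G.src e = i ∧ G.tgt e = j), w e)
    (L : Matrix (Fin (n + 1)) (Fin (n + 1)) ℤ)
    (hL_off : ∀ i j, i ≠ j → L i j = -a i j)
    (hL_diag : ∀ j, L j j = ∑ k, a k j) :
    (L.submatrix r.succAbove r.succAbove).det
      = ∑ f : Fin n → E, if Good G r f ∧ Acyc G r f then ∏ j, w (f j) else 0 := by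
  rw [det_eq_sum G r w a ha_diag ha_off L hL_off hL_diag]
  apply Finset.sum_congr rfl; intro f _
  by_cases hg : Good G r f
  · have hcoef : ∀ j, coef G r w j (f j) = w (f j) := fun j => if_pos ⟨(hg j).1, (hg j).2⟩
    by_cases ha : Acyc G r f
    · obtain ⟨h, hh⟩ := rank_of_acyc G r f ha
      rw [if_pos ⟨hg, ha⟩, det_D_of_rank G r f hg h hh, mul_one]
      exact Finset.prod_congr rfl fun j _ => hcoef j
    · rw [if_neg (fun hc => ha hc.2), det_D_of_not_acyc G r f hg ha, mul_zero]
  · rw [if_neg (fun hc => hg hc.1)]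
    rw [Good] at hg; push_neg at hg
    obtain ⟨j, hj⟩ := hg
    have : coef G r w j (f j) = 0 := by
      rw [coef, if_neg]
      intro hc
      exact hc.2 (hj hc.1)
    rw [Finset.prod_eq_zero (Finset.mem_univ j) this, zero_mul]
noncomputable def pick (T : Finset E) (hT : IsOrientedSpanningTree G r T) (j : Fin n) : E :=
  (Finset.card_eq_one.mp (hT.1 (r.succAbove j) (Fin.succAbove_ne r j))).choose

lemma pick_spec (T : Finset E) (hT : IsOrientedSpanningTree G r T) (j : Fin n) :
    T.filter (fun e => G.tgt e = r.succAbove j) = {pick G r T hT j} :=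
  (Finset.card_eq_one.mp (hT.1 (r.succAbove j) (Fin.succAbove_ne r j))).choose_spec

lemma pick_mem (T : Finset E) (hT : IsOrientedSpanningTree G r T) (j : Fin n) :
    pick G r T hT j ∈ T ∧ G.tgt (pick G r T hT j) = r.succAbove j := by
  have h : pick G r T hT j ∈ T.filter (fun e => G.tgt e = r.succAbove j) := by
    rw [pick_spec]; exact Finset.mem_singleton_self _
  simpa [Finset.mem_filter] using h

lemma pick_uniq (T : Finset E) (hT : IsOrientedSpanningTree G r T) (j : Fin n) {e : E}
    (he : e ∈ T) (ht : G.tgt e = r.succAbove j) : e = pick G r T hT j := by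
  have h : e ∈ T.filter (fun e => G.tgt e = r.succAbove j) := Finset.mem_filter.mpr ⟨he, ht⟩
  rw [pick_spec] at h
  simpa using h

lemma good_pick (T : Finset E) (hT : IsOrientedSpanningTree G r T) :
    Good G r (pick G r T hT) := by
  intro j
  refine ⟨(pick_mem G r T hT j).2, ?_⟩
  intro hsrc
  apply hT.2.2
  refine ⟨[pick G r T hT j], by simp, ?_, List.isChain_singleton _, ?_⟩
  · intro e he; simp only [List.mem_singleton] at he; subst he; exact (pick_mem G r T hT j).1
  · intro e₁ h₁ e₂ h₂
    simp only [List.head?_cons, Option.mem_some_iff] at h₁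
    simp only [List.getLast?_singleton, Option.mem_some_iff] at h₂
    subst h₁; subst h₂
    exact hsrc.symm

lemma acyc_pick (T : Finset E) (hT : IsOrientedSpanningTree G r T) :
    Acyc G r (pick G r T hT) := by
  set f := pick G r T hT with hfdef
  by_contra hA
  rw [Acyc] at hA; push_neg at hA
  obtain ⟨j₀, hj₀⟩ := hA
  have hsome : ∀ m, ((pstep G r f)^[m] (some j₀)).isSome :=
    fun m => Option.ne_none_iff_isSome.mp (hj₀ m)
  set u : ℕ → Fin n := fun m => ((pstep G r f)^[m] (some j₀)).get (hsome m) with hu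
  have hiter : ∀ m, (pstep G r f)^[m] (some j₀) = some (u m) := fun m => (Option.some_get _).symm
  have hstep : ∀ m, pf G r f (u m) = some (u (m+1)) := by
    intro m
    have h1 : (pstep G r f)^[m+1] (some j₀) = pstep G r f (some (u m)) := by
      rw [Function.iterate_succ_apply', hiter m]
    rw [hiter (m+1)] at h1
    simpa [pstep] using h1.symm
  have hsrc : ∀ m, G.src (f (u m)) = r.succAbove (u (m+1)) :=
    fun m => (pf_eq_some G r f (u m) (u (m+1))).mp (hstep m)
  have htgt : ∀ m, G.tgt (f (u m)) = r.succAbove (u m) :=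
    fun m => (pick_mem G r T hT (u m)).2
  obtain ⟨s', t', hst, hust'⟩ := Fintype.exists_ne_map_eq_of_card_lt
    (fun k : Fin (n+1) => u k) (by simp)
  have hex : ∃ s t : ℕ, s < t ∧ u s = u t := by
    rcases lt_or_gt_of_ne hst with h | h
    · exact ⟨s', t', h, hust'⟩
    · exact ⟨t', s', h, hust'.symm⟩
  obtain ⟨s, t, hlt, hust⟩ := hex
  set q := t - s with hq
  have hqpos : 0 < q := by omega
  set base : List E := (List.range q).map (fun i => f (u (s + i))) with hbase
  have hlen : base.length = q := by simp [hbase]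
  have hget : ∀ (k : ℕ) (hk : k < base.length), base.get ⟨k, hk⟩ = f (u (s + k)) := by
    intro k hk
    simp [hbase]
  apply hT.2.2
  refine ⟨base.reverse, ?_, ?_, ?_, ?_⟩
  · intro h
    have := congrArg List.length h
    simp only [List.length_reverse, hlen, List.length_nil] at this
    omega
  · intro e he
    rw [List.mem_reverse] at he
    simp only [hbase, List.mem_map] at he
    obtain ⟨i, _, rfl⟩ := he
    exact (pick_mem G r T hT (u (s + i))).1
  · show List.IsChain _ base.reverse
    rw [List.isChain_reverse, List.isChain_iff_getElem]
    intro k hk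
    show G.tgt (base.get ⟨k+1, hk⟩) = G.src (base.get ⟨k, by omega⟩)
    rw [hget, hget]
    show G.tgt (f (u (s + (k+1)))) = G.src (f (u (s + k)))
    rw [htgt, hsrc]
    congr 2
  · intro e₁ h₁ e₂ h₂
    rw [List.head?_reverse] at h₁
    rw [List.getLast?_reverse] at h₂
    have hh : base.head? = some (f (u (s + 0))) := by
      rw [List.head?_eq_getElem?, List.getElem?_eq_getElem (by omega)]
      have h5 := hget 0 (by omega)
      simp only [List.get_eq_getElem] at h5
      rw [h5]
    have hl : base.getLast? = some (f (u (s + (q - 1)))) := by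
      rw [List.getLast?_eq_getElem?, List.getElem?_eq_getElem (by omega)]
      have h5 := hget (base.length - 1) (by omega)
      simp only [List.get_eq_getElem] at h5
      rw [h5, hlen]
    rw [hl, Option.mem_some_iff] at h₁
    rw [hh, Option.mem_some_iff] at h₂
    subst h₁; subst h₂
    rw [htgt, hsrc]
    have h6 : s + (q - 1) + 1 = t := by omega
    rw [h6, ← hust]
    norm_num

lemma image_isOST (f : Fin n → E) (hg : Good G r f) (ha : Acyc G r f) :
    IsOrientedSpanningTree G r (Finset.image f Finset.univ) := by
  obtain ⟨h, hh⟩ := rank_of_acyc G r f ha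
  refine ⟨?_, ?_, ?_⟩
  · intro v hv
    obtain ⟨j, rfl⟩ := Fin.exists_succAbove_eq hv
    have hfil : (Finset.image f Finset.univ).filter (fun e => G.tgt e = r.succAbove j)
        = {f j} := by
      ext e
      simp only [Finset.mem_filter, Finset.mem_image, Finset.mem_singleton, Finset.mem_univ,
        true_and]
      constructor
      · rintro ⟨⟨j', rfl⟩, htgt⟩
        have : j' = j := Fin.succAbove_right_injective ((hg j').1.symm.trans htgt)
        rw [this]
      · rintro rfl; exact ⟨⟨j, rfl⟩, (hg j).1⟩
    rw [hfil]
    exact Finset.card_singleton _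
  · rw [Finset.card_eq_zero, Finset.filter_eq_empty_iff]
    intro e he
    rw [Finset.mem_image] at he
    obtain ⟨j, _, rfl⟩ := he
    rw [(hg j).1]
    exact Fin.succAbove_ne r j
  · rintro ⟨l, hne, hmem, hchain, hwrap⟩
    have hlen : 0 < l.length := List.length_pos_iff.mpr hne
    have hJ : ∀ (k : ℕ) (hk : k < l.length), ∃ j, l.get ⟨k, hk⟩ = f j := by
      intro k hk
      have hm := hmem (l.get ⟨k, hk⟩) (l.get_mem _)
      rw [Finset.mem_image] at hm
      obtain ⟨j, _, hj⟩ := hm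
      exact ⟨j, hj.symm⟩
    choose J hJspec using hJ
    have hrel : ∀ (k : ℕ) (hk : k + 1 < l.length),
        pf G r f (J (k+1) hk) = some (J k (by omega)) := by
      intro k hk
      rw [pf_eq_some]
      have hc := List.isChain_iff_getElem.mp hchain k (by omega)
      change G.tgt (l.get ⟨k, by omega⟩) = G.src (l.get ⟨k+1, hk⟩) at hc
      rw [hJspec (k+1) hk, hJspec k (by omega)] at hc
      rw [← hc, (hg _).1]
    have hmono : ∀ (k : ℕ) (hk : k < l.length), h (J 0 hlen) ≤ h (J k hk) := by
      intro k
      induction k with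
      | zero => intro hk; exact le_refl _
      | succ k ih =>
        intro hk
        have h1 : k < l.length := by omega
        exact le_trans (ih h1) (le_of_lt (hh _ _ (hrel k hk)))
    have hwrap' : pf G r f (J 0 hlen) = some (J (l.length - 1) (by omega)) := by
      have h₁ : l.get ⟨0, hlen⟩ ∈ l.head? := by
        rw [List.head?_eq_getElem?, List.getElem?_eq_getElem hlen]
        simp
      have h₂ : l.get ⟨l.length - 1, by omega⟩ ∈ l.getLast? := by
        rw [List.getLast?_eq_getElem?, List.getElem?_eq_getElem (by omega)]
        simp
      have hw := hwrap _ h₁ _ h₂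
      rw [pf_eq_some]
      rw [hJspec 0 hlen, hJspec (l.length - 1) (by omega)] at hw
      rw [← hw, (hg _).1]
    have hlast := hh _ _ hwrap'
    have := hmono (l.length - 1) (by omega)
    omega

open Classical in
lemma sum_good_eq_treeCount (w : E → ℤ) :
    (∑ f : Fin n → E, if Good G r f ∧ Acyc G r f then ∏ j, w (f j) else 0)
      = treeCount G w r := by
  rw [treeCount, ← Finset.sum_filter, ← Finset.sum_filter]
  refine Finset.sum_bij' (fun f _ => Finset.image f Finset.univ)
    (fun T hT => pick G r T (Finset.mem_filter.mp hT).2) ?_ ?_ ?_ ?_ ?_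
  · intro f hf
    rw [Finset.mem_filter] at hf ⊢
    exact ⟨Finset.mem_univ _, image_isOST G r f hf.2.1 hf.2.2⟩
  · intro T hT
    rw [Finset.mem_filter]
    exact ⟨Finset.mem_univ _,
      good_pick G r T (Finset.mem_filter.mp hT).2, acyc_pick G r T (Finset.mem_filter.mp hT).2⟩
  · intro f hf
    rw [Finset.mem_filter] at hf
    funext j
    exact (pick_uniq G r _ _ j (Finset.mem_image.mpr ⟨j, Finset.mem_univ _, rfl⟩)
      (hf.2.1 j).1).symm
  · intro T hT
    have hT' := (Finset.mem_filter.mp hT).2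
    ext e
    simp only [Finset.mem_image, Finset.mem_univ, true_and]
    constructor
    · rintro ⟨j, rfl⟩
      exact (pick_mem G r T hT' j).1
    · intro he
      have htr : G.tgt e ≠ r := by
        intro hr
        have h0 : T.filter (fun e => G.tgt e = r) = ∅ := Finset.card_eq_zero.mp hT'.2.1
        have : e ∈ T.filter (fun e => G.tgt e = r) := Finset.mem_filter.mpr ⟨he, hr⟩
        rw [h0] at this
        exact absurd this (Finset.notMem_empty e)
      obtain ⟨j, hj⟩ := Fin.exists_succAbove_eq htr
      exact ⟨j, (pick_uniq G r T hT' j he hj.symm).symm⟩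
  · intro f hf
    rw [Finset.mem_filter] at hf
    have hinj : ∀ x ∈ Finset.univ, ∀ y ∈ Finset.univ, f x = f y → x = y := by
      intro x _ y _ hxy
      have : G.tgt (f x) = G.tgt (f y) := by rw [hxy]
      rw [(hf.2.1 x).1, (hf.2.1 y).1] at this
      exact Fin.succAbove_right_injective this
    rw [Finset.prod_image hinj]

end MTT

/-- **Matrix tree theorem.** For a finite weighted directed multigraph `G` on the
vertex set `Fin (n+1)` with Laplacian matrix `L` (where `L i j = -a i j` for
`i ≠ j` and `L j j = ∑ k, a k j`, with `a i j` the total weight of edges from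
`v_i` to `v_j` for `i ≠ j` and `a i i = 0`), the determinant of the matrix
obtained from `L` by deleting the `r`-th row and column equals the weighted
number of oriented spanning trees rooted at `v_r`. -/
theorem matrix_tree_theorem (n : ℕ) (E : Type) [Fintype E] [DecidableEq E]
    (G : Multidigraph (Fin (n + 1)) E) (w : E → ℤ)
    (a : Fin (n + 1) → Fin (n + 1) → ℤ)
    (ha_diag : ∀ i, a i i = 0)
    (ha_off : ∀ i j, i ≠ j →
      a i j = ∑ e ∈ Finset.univ.filter (fun e => G.src e = i ∧ G.tgt e = j), w e)
    (L : Matrix (Fin (n + 1)) (Fin (n + 1)) ℤ)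
    (hL_off : ∀ i j, i ≠ j → L i j = -a i j)
    (hL_diag : ∀ j, L j j = ∑ k, a k j)
    (r : Fin (n + 1)) :
    (L.submatrix r.succAbove r.succAbove).det = treeCount G w r := by
  rw [MTT.det_eq_sum_good G r w a ha_diag ha_off L hL_off hL_diag,
    MTT.sum_good_eq_treeCount G r w]
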